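/- Suppose p : ℝ^n → ℝ is a complete isometric hyperbolic polynomial of degree d along e, with hyperbolicity cone Λ = Λ(p,e). Then λ(Λ) = ℝ^d_+ ∩ ℝ^d_↓ holds if and only if λ(ℝ^n) = ℝ^d_↓. -/

import Mathlib

/-- Two antitone tuples with the same "characteristic polynomial" are equal. -/
lemma antitone_eq_of_prod {d : ℕ} (a b : Fin d → ℝ) (ha : Antitone a) (hb : Antitone b)
    (h : ∀ t : ℝ, ∏ i, (a i - t) = ∏ i, (b i - t)) : a = b := by
  have hpoly : (∏ i, (Polynomial.X - Polynomial.C (a i)))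
      = ∏ i, (Polynomial.X - Polynomial.C (b i)) := by
    apply Polynomial.funext
    intro t
    have := h t
    simp only [Polynomial.eval_prod, Polynomial.eval_sub, Polynomial.eval_X, Polynomial.eval_C]
    have ha' : ∏ i, (t - a i) = (-1)^d * ∏ i, (a i - t) := by
      have e1 : ∏ i : Fin d, (t - a i) = ∏ i : Fin d, ((-1) * (a i - t)) :=
        Finset.prod_congr rfl (fun i _ => by ring)
      rw [e1, Finset.prod_mul_distrib, Finset.prod_const, Finset.card_univ, Fintype.card_fin]
    have hb' : ∏ i, (t - b i) = (-1)^d * ∏ i, (b i - t) := by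
      have e1 : ∏ i : Fin d, (t - b i) = ∏ i : Fin d, ((-1) * (b i - t)) :=
        Finset.prod_congr rfl (fun i _ => by ring)
      rw [e1, Finset.prod_mul_distrib, Finset.prod_const, Finset.card_univ, Fintype.card_fin]
    rw [ha', hb', h t]
  have key : (Multiset.map a Finset.univ.val) = (Multiset.map b Finset.univ.val) := by
    have ra := Polynomial.roots_multiset_prod_X_sub_C (Multiset.map a Finset.univ.val)
    have rb := Polynomial.roots_multiset_prod_X_sub_C (Multiset.map b Finset.univ.val)
    rw [← ra, ← rb]
    congr 1
    rw [Multiset.map_map, Multiset.map_map]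
    simpa [Finset.prod] using hpoly
  rw [Fin.univ_val_map, Fin.univ_val_map] at key
  have hperm : List.Perm (List.ofFn a) (List.ofFn b) := Multiset.coe_eq_coe.mp key
  have sa : (List.ofFn a).Pairwise (· ≥ ·) :=
    List.pairwise_ofFn.mpr (fun i j hij => ha hij.le)
  have sb : (List.ofFn b).Pairwise (· ≥ ·) :=
    List.pairwise_ofFn.mpr (fun i j hij => hb hij.le)
  exact List.ofFn_injective (List.Perm.eq_of_pairwise' sa sb hperm)

/-- For a complete isometric hyperbolic polynomial `p` of degree `d`
along `e` with hyperbolicity cone `Λ`: `λ(Λ) = ℝ^d₊ ∩ ℝ^d↓` if and only if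
`λ(ℝ^n) = ℝ^d↓`. -/
theorem stmt_4 {n d : ℕ}
    (P : MvPolynomial (Fin n) ℝ) (e : Fin n → ℝ)
    (lm : (Fin n → ℝ) → Fin d → ℝ)
    (hhom : P.IsHomogeneous d)
    (hpe : MvPolynomial.eval e P ≠ 0)
    (hroots : ∀ (x : Fin n → ℝ) (t : ℝ),
      MvPolynomial.eval (x - t • e) P = MvPolynomial.eval e P * ∏ i, (lm x i - t))
    (hord : ∀ x, Antitone (lm x))
    (hcomplete : ∀ x, lm x = 0 → x = 0)
    (hiso : ∀ y z : Fin n → ℝ, ∃ x, lm x = lm z ∧ lm (x + y) = lm x + lm y) :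
    lm '' {y : Fin n → ℝ | ∀ i, 0 ≤ lm y i}
        = {u : Fin d → ℝ | (∀ i, 0 ≤ u i) ∧ Antitone u}
      ↔ Set.range lm = {u : Fin d → ℝ | Antitone u} := by
  -- shift lemma
  have hshift : ∀ (x : Fin n → ℝ) (s : ℝ), lm (x + s • e) = fun i => lm x i + s := by
    intro x s
    apply antitone_eq_of_prod _ _ (hord _) (fun i j hij => by
      simpa using add_le_add_right (hord x hij) s)
    intro t
    have h1 := hroots (x + s • e) t
    have h2 := hroots x (t - s)
    have harg : x + s • e - t • e = x - (t - s) • e := by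
      ext i; simp [sub_smul]; ring
    rw [harg, h2] at h1
    have := mul_left_cancel₀ hpe h1.symm
    rw [this]
    exact Finset.prod_congr rfl (fun i _ => by ring)
  constructor
  · intro h
    ext u
    simp only [Set.mem_range, Set.mem_setOf_eq]
    constructor
    · rintro ⟨x, rfl⟩; exact hord x
    · intro hu
      obtain ⟨s, hs⟩ := Finite.exists_le (fun i => -u i)
      have hv : (fun i => u i + s) ∈ {u : Fin d → ℝ | (∀ i, 0 ≤ u i) ∧ Antitone u} := by
        constructor
        · intro i; have := hs i; dsimp only; linarith
        · intro i j hij; simpa using add_le_add_right (hu hij) s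
      rw [← h] at hv
      obtain ⟨z, hz, hzv⟩ := hv
      refine ⟨z + (-s) • e, ?_⟩
      rw [hshift]
      funext i
      have : lm z i = u i + s := congrFun hzv i
      rw [this]; ring
  · intro h
    ext u
    simp only [Set.mem_image, Set.mem_setOf_eq]
    constructor
    · rintro ⟨y, hy, rfl⟩
      exact ⟨hy, hord y⟩
    · rintro ⟨hu0, hu⟩
      have : u ∈ Set.range lm := by rw [h]; exact hu
      obtain ⟨x, rfl⟩ := this
      exact ⟨x, hu0, rfl⟩
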